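/- Let L be an orthomodular lattice and X = c₀₀(L)/Δ the associated quotient space. Then every element x ∈ X can be represented as a finite sum x = ∑ᵢ aᵢ ⊗ Aᵢ with aᵢ ∈ ℝ, Aᵢ ∈ L and Aᵢ ∧ Aⱼ = 𝟬 for all i ≠ j. -/

import Mathlib

/-- The subspace `Δ ⊆ c₀₀(L)` spanned by `e_𝟬` and the vectors
`(e_A + e_B) − (e_{A∨B} + e_{A∧B})`. -/
noncomputable def deltaSpan (L : Type*) [Lattice L] [BoundedOrder L] :
    Submodule ℝ (L →₀ ℝ) :=
  Submodule.span ℝ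
    ({Finsupp.single (⊥ : L) (1 : ℝ)} ∪
      {f : L →₀ ℝ | ∃ A B : L,
        f = Finsupp.single A 1 + Finsupp.single B 1
          - (Finsupp.single (A ⊔ B) 1 + Finsupp.single (A ⊓ B) 1)})

/-- The quotient space `X = c₀₀(L)/Δ`. -/
abbrev XSpace (L : Type*) [Lattice L] [BoundedOrder L] :=
  (L →₀ ℝ) ⧸ deltaSpan L

/-- The element `a ⊗ A := q(a·e_A)` of `X`. -/
noncomputable def tens (L : Type*) [Lattice L] [BoundedOrder L] (a : ℝ) (A : L) :
    XSpace L :=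
  Submodule.Quotient.mk (Finsupp.single A a)

section Helpers
variable {L : Type*} [Lattice L] [BoundedOrder L]

lemma tens_bot (a : ℝ) : tens L a (⊥ : L) = 0 := by
  rw [tens, Submodule.Quotient.mk_eq_zero]
  have h : Finsupp.single (⊥ : L) a = a • Finsupp.single (⊥ : L) (1 : ℝ) := by
    rw [Finsupp.smul_single, smul_eq_mul, mul_one]
  rw [h]
  exact Submodule.smul_mem _ a (Submodule.subset_span (Set.mem_union_left _ rfl))

lemma tens_add_tens (a : ℝ) (A B : L) :
    tens L a A + tens L a B = tens L a (A ⊔ B) + tens L a (A ⊓ B) := by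
  unfold tens
  rw [← Submodule.Quotient.mk_add, ← Submodule.Quotient.mk_add, Submodule.Quotient.eq]
  have h : Finsupp.single A a + Finsupp.single B a
      - (Finsupp.single (A ⊔ B) a + Finsupp.single (A ⊓ B) a)
      = a • (Finsupp.single A 1 + Finsupp.single B 1
          - (Finsupp.single (A ⊔ B) 1 + Finsupp.single (A ⊓ B) 1)) := by
    simp [smul_sub, smul_add, Finsupp.smul_single]
  rw [h]
  exact Submodule.smul_mem _ a
    (Submodule.subset_span (Set.mem_union_right _ ⟨A, B, rfl⟩))

lemma tens_coeff_add (a b : ℝ) (A : L) :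
    tens L (a + b) A = tens L a A + tens L b A := by
  unfold tens
  rw [← Submodule.Quotient.mk_add, Finsupp.single_add]

lemma tens_split (b : ℝ) {E B' B : L} (hj : E ⊔ B' = B) (hm : E ⊓ B' = ⊥) :
    tens L b B = tens L b E + tens L b B' := by
  rw [tens_add_tens, hj, hm, tens_bot, add_zero]

noncomputable def listSum (l : List (ℝ × L)) : XSpace L := (l.map fun p => tens L p.1 p.2).sum

lemma merge_lemma
    (compl : L → L)
    (hcompl_inf : ∀ x : L, x ⊓ compl x = ⊥)
    (horthomodular : ∀ x y : L, x ≤ y → y = x ⊔ (y ⊓ compl x)) :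
    ∀ (t : List (ℝ × L)), (t.Pairwise fun p q => p.2 ⊓ q.2 = ⊥) → ∀ (a : ℝ) (A : L),
    ∃ l : List (ℝ × L), (l.Pairwise fun p q => p.2 ⊓ q.2 = ⊥) ∧
      listSum l = tens L a A + listSum t ∧
      ∀ p ∈ l, p.2 ≤ A ∨ ∃ q ∈ t, p.2 ≤ q.2 := by
  intro t
  induction t with
  | nil =>
    intro _ a A
    exact ⟨[(a, A)], by simp, by simp [listSum], by simp⟩
  | cons hd tl ih =>
    intro ht a A
    obtain ⟨b, B⟩ := hd
    rw [List.pairwise_cons] at ht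
    obtain ⟨hB, htl⟩ := ht
    set E := A ⊓ B with hE
    set D := A ⊓ compl E with hD
    set B' := B ⊓ compl E with hB'
    have hAsplit : E ⊔ D = A := (horthomodular E A inf_le_left).symm
    have hBsplit : E ⊔ B' = B := (horthomodular E B inf_le_right).symm
    have hED : E ⊓ D = ⊥ := le_bot_iff.mp <| by
      calc E ⊓ D ≤ E ⊓ compl E := inf_le_inf_left E inf_le_right
      _ = ⊥ := hcompl_inf E
    have hEB' : E ⊓ B' = ⊥ := le_bot_iff.mp <| by
      calc E ⊓ B' ≤ E ⊓ compl E := inf_le_inf_left E inf_le_right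
      _ = ⊥ := hcompl_inf E
    obtain ⟨l'', hpw, hsum, hle⟩ := ih htl a D
    refine ⟨(a + b, E) :: (b, B') :: l'', ?_, ?_, ?_⟩
    · refine List.Pairwise.cons ?_ (List.Pairwise.cons ?_ hpw)
      · intro p hp
        rcases List.mem_cons.mp hp with rfl | hp
        · exact hEB'
        · rcases hle p hp with h | ⟨q, hq, h⟩
          · exact le_bot_iff.mp <| by
              calc E ⊓ p.2 ≤ E ⊓ D := inf_le_inf_left E h
              _ = ⊥ := hED
          · exact le_bot_iff.mp <| by
              calc E ⊓ p.2 ≤ B ⊓ q.2 := inf_le_inf inf_le_right h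
              _ = ⊥ := hB q hq
      · intro p hp
        rcases hle p hp with h | ⟨q, hq, h⟩
        · refine le_bot_iff.mp ?_
          calc B' ⊓ p.2 ≤ B' ⊓ D := inf_le_inf_left B' h
          _ ≤ E ⊓ compl E := le_inf
            (le_inf (inf_le_of_right_le inf_le_left) (inf_le_of_left_le inf_le_left))
            (inf_le_of_left_le inf_le_right)
          _ = ⊥ := hcompl_inf E
        · refine le_bot_iff.mp ?_
          calc B' ⊓ p.2 ≤ B ⊓ q.2 := inf_le_inf inf_le_left h
          _ = ⊥ := hB q hq
    · have e1 : tens L a A = tens L a E + tens L a D := tens_split a hAsplit hED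
      have e2 : tens L b B = tens L b E + tens L b B' := tens_split b hBsplit hEB'
      simp only [listSum, List.map_cons, List.sum_cons] at hsum ⊢
      rw [tens_coeff_add, hsum, e1, e2]
      abel
    · intro p hp
      rcases List.mem_cons.mp hp with rfl | hp
      · exact Or.inr ⟨(b, B), List.mem_cons_self, inf_le_right⟩
      rcases List.mem_cons.mp hp with rfl | hp
      · exact Or.inr ⟨(b, B), List.mem_cons_self, inf_le_left⟩
      · rcases hle p hp with h | ⟨q, hq, h⟩
        · exact Or.inl (h.trans inf_le_left)
        · exact Or.inr ⟨q, List.mem_cons_of_mem _ hq, h⟩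

lemma rep_lemma
    (compl : L → L)
    (hcompl_inf : ∀ x : L, x ⊓ compl x = ⊥)
    (horthomodular : ∀ x y : L, x ≤ y → y = x ⊔ (y ⊓ compl x)) :
    ∀ (t : List (ℝ × L)),
    ∃ l : List (ℝ × L), (l.Pairwise fun p q => p.2 ⊓ q.2 = ⊥) ∧
      listSum l = listSum t := by
  intro t
  induction t with
  | nil => exact ⟨[], List.Pairwise.nil, rfl⟩
  | cons hd tl ih =>
    obtain ⟨l'', hpw, hsum⟩ := ih
    obtain ⟨l, hpw', hsum', -⟩ :=
      merge_lemma compl hcompl_inf horthomodular l'' hpw hd.1 hd.2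
    refine ⟨l, hpw', ?_⟩
    rw [hsum', hsum]
    simp [listSum]

end Helpers

/-- Over an orthomodular lattice `L`, every element of `X = c₀₀(L)/Δ`
can be written as a finite sum `∑ᵢ aᵢ ⊗ Aᵢ` with `Aᵢ ∧ Aⱼ = 𝟬` for `i ≠ j`. -/
theorem exists_disjoint_representation {L : Type*} [Lattice L] [BoundedOrder L]
    (compl : L → L)
    (hcompl_invol : ∀ x : L, compl (compl x) = x)
    (hcompl_anti : ∀ x y : L, x ≤ y → compl y ≤ compl x)
    (hcompl_inf : ∀ x : L, x ⊓ compl x = ⊥)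
    (hcompl_sup : ∀ x : L, x ⊔ compl x = ⊤)
    (horthomodular : ∀ x y : L, x ≤ y → y = x ⊔ (y ⊓ compl x))
    (x : XSpace L) :
    ∃ (n : ℕ) (a : Fin n → ℝ) (A : Fin n → L),
      x = ∑ i, tens L (a i) (A i) ∧ ∀ i j, i ≠ j → A i ⊓ A j = ⊥ := by
  obtain ⟨f, rfl⟩ := Submodule.Quotient.mk_surjective (deltaSpan L) x
  have hx : (Submodule.Quotient.mk f : XSpace L)
      = listSum (f.support.toList.map fun A => (f A, A)) := by
    have h1 : listSum (f.support.toList.map fun A => (f A, A))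
        = ∑ A ∈ f.support, tens L (f A) A := by
      rw [listSum, List.map_map, ← Finset.sum_map_toList]
      rfl
    rw [h1]
    have h2 : f = ∑ A ∈ f.support, Finsupp.single A (f A) := by
      conv_lhs => rw [← Finsupp.sum_single f]
      rfl
    conv_lhs => rw [h2]
    rw [show (Submodule.Quotient.mk : (L →₀ ℝ) → XSpace L)
        = (deltaSpan L).mkQ from rfl, map_sum]
    rfl
  obtain ⟨l, hpw, hsum⟩ := rep_lemma compl hcompl_inf horthomodular
    (f.support.toList.map fun A => (f A, A))
  refine ⟨l.length, fun i => (l.get i).1, fun i => (l.get i).2, ?_, ?_⟩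
  · rw [hx, ← hsum, listSum]
    conv_lhs => rw [← List.ofFn_get l]
    rw [List.map_ofFn, List.sum_ofFn]
    rfl
  · intro i j hij
    rcases lt_or_gt_of_ne hij with h | h
    · exact List.pairwise_iff_get.mp hpw i j h
    · rw [inf_comm]
      exact List.pairwise_iff_get.mp hpw j i h
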